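/- arXiv:2402.03030 — 4 statements merged into one kernel-verified Lean document; each statement's English description precedes it below -/
import Mathlib

section
/- Let f : ℝⁿ → [0,∞) be a probability density function. Define the layered entropy h_L(f) = ∫₀^∞ μ(L_t⁺(f)) log μ(L_t⁺(f)) dt, where L_t⁺(f) = {z : f(z) ≥ t}, and define h_∞(f) = -log(ess sup f). Then h_∞(f) ≤ h_L(f) ≤ h(f), where h(f) = -∫ f log f is the differential entropy, provided these quantities are well-defined and finite. -/
open MeasureTheory Set
open scoped ENNReal

section aux

variable {α : Type*} [MeasurableSpace α]

lemma layered_meas_antitone (f : α → ℝ) (μ : Measure α) :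
    Antitone (fun t => μ {z | t ≤ f z}) :=
  fun _ _ hst => measure_mono (fun _ hz => le_trans hst hz)

lemma layered_aux_lower (μ : Measure α) (f : α → ℝ)
    (hf : Measurable f) (hf0 : ∀ z, 0 ≤ f z)
    (hf1 : ∫⁻ z, ENNReal.ofReal (f z) ∂μ = 1)
    (hfin : ∀ t > 0, μ {z | t ≤ f z} < ⊤)
    (hess : essSup (fun z => ENNReal.ofReal (f z)) μ ≠ ⊤)
    (hLint : IntegrableOn
      (fun t => (μ {z | t ≤ f z}).toReal * Real.log (μ {z | t ≤ f z}).toReal)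
      (Set.Ioi (0:ℝ)) volume) :
    -Real.log (essSup (fun z => ENNReal.ofReal (f z)) μ).toReal ≤
      ∫ t in Set.Ioi (0:ℝ), (μ {z | t ≤ f z}).toReal * Real.log (μ {z | t ≤ f z}).toReal := by
  set A : ℝ → ℝ≥0∞ := fun t => μ {z | t ≤ f z} with hA
  set a : ℝ → ℝ := fun t => (A t).toReal with ha
  set M' : ℝ≥0∞ := essSup (fun z => ENNReal.ofReal (f z)) μ with hM'
  set M : ℝ := M'.toReal with hM
  have hAanti : Antitone A := layered_meas_antitone f μ
  have hAm : Measurable A := hAanti.measurable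
  have ham : Measurable a := hAm.ennreal_toReal
  have hlayer : ∫⁻ t in Ioi (0:ℝ), A t = 1 := by
    rw [← lintegral_eq_lintegral_meas_le μ (Filter.Eventually.of_forall hf0) hf.aemeasurable]
    exact hf1
  -- M' ≠ 0 and M > 0
  have hM'0 : M' ≠ 0 := by
    intro h0
    have hle : ∀ᵐ z ∂μ, ENNReal.ofReal (f z) ≤ M' := ae_le_essSup
    have : ∫⁻ z, ENNReal.ofReal (f z) ∂μ = 0 := by
      rw [← lintegral_zero (μ := μ)]
      refine lintegral_congr_ae ?_
      filter_upwards [hle] with z hz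
      exact le_antisymm (h0 ▸ hz) zero_le
    rw [hf1] at this; exact one_ne_zero this
  have hMpos : 0 < M := ENNReal.toReal_pos hM'0 hess
  -- A vanishes above M
  have hAzero : ∀ t : ℝ, M < t → A t = 0 := by
    intro t ht
    have hle : ∀ᵐ z ∂μ, ENNReal.ofReal (f z) ≤ M' := ae_le_essSup
    have h0 : μ {z | M' < ENNReal.ofReal (f z)} = 0 := by
      rw [ae_iff] at hle
      simpa [not_le] using hle
    refine measure_mono_null (fun z hz => ?_) h0
    have : ENNReal.ofReal t ≤ ENNReal.ofReal (f z) := ENNReal.ofReal_le_ofReal hz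
    have hMt : M' < ENNReal.ofReal t := by
      rw [← ENNReal.ofReal_toReal hess]
      exact (ENNReal.ofReal_lt_ofReal_iff (lt_of_le_of_lt hMpos.le ht)).mpr ht
    exact lt_of_lt_of_le hMt this
  -- restrict everything to Ioc 0 M
  have hdisj : Disjoint (Ioc (0:ℝ) M) (Ioi M) := Ioc_disjoint_Ioi le_rfl
  have hunion : Ioc (0:ℝ) M ∪ Ioi M = Ioi 0 := Ioc_union_Ioi_eq_Ioi hMpos.le
  have hg0 : ∀ t ∈ Ioi M, a t * Real.log (a t) = 0 := by
    intro t ht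
    simp [ha, hAzero t ht]
  have hint_eq : ∫ t in Ioi (0:ℝ), a t * Real.log (a t)
      = ∫ t in Ioc (0:ℝ) M, a t * Real.log (a t) := by
    rw [← hunion, setIntegral_union hdisj measurableSet_Ioi
      (hLint.mono_set (by rw [← hunion]; exact subset_union_left))
      (hLint.mono_set (by rw [← hunion]; exact subset_union_right)),
      setIntegral_eq_zero_of_forall_eq_zero hg0, add_zero]
  have hlint_Ioi : ∫⁻ t in Ioi M, A t = 0 := by
    rw [setLIntegral_congr_fun measurableSet_Ioi
      (fun t ht => hAzero t ht)]
    simp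
  have hlint_Ioc : ∫⁻ t in Ioc (0:ℝ) M, A t = 1 := by
    rw [← hlayer, ← hunion, lintegral_union measurableSet_Ioi hdisj, hlint_Ioi, add_zero]
  -- real integral of a over Ioc 0 M is 1
  have hafin : ∀ᵐ t ∂(volume.restrict (Ioc (0:ℝ) M)), A t < ⊤ := by
    rw [ae_restrict_iff' measurableSet_Ioc]
    exact Filter.Eventually.of_forall (fun t ht => hfin t ht.1)
  have haint : Integrable a (volume.restrict (Ioc (0:ℝ) M)) :=
    integrable_toReal_of_lintegral_ne_top hAm.aemeasurable (by rw [hlint_Ioc]; simp)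
  have hInta : ∫ t in Ioc (0:ℝ) M, a t = 1 := by
    rw [ha]
    rw [integral_toReal hAm.aemeasurable hafin, hlint_Ioc, ENNReal.toReal_one]
  -- Jensen
  haveI : IsFiniteMeasure (volume.restrict (Ioc (0:ℝ) M)) := by
    constructor
    rw [Measure.restrict_apply_univ, Real.volume_Ioc]
    exact ENNReal.ofReal_lt_top
  haveI : NeZero (volume.restrict (Ioc (0:ℝ) M)) := by
    constructor
    rw [Ne, Measure.restrict_eq_zero, Real.volume_Ioc]
    simp [hMpos]
  have hjensen := Real.convexOn_mul_log.map_average_le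
    (Real.continuous_mul_log.continuousOn) isClosed_Ici
    (Filter.Eventually.of_forall (fun t => ENNReal.toReal_nonneg : ∀ t : ℝ, a t ∈ Ici (0:ℝ)))
    haint (hLint.mono_set (by rw [← hunion]; exact subset_union_left))
  rw [average_eq, average_eq, hInta, measureReal_def, Measure.restrict_apply_univ, Real.volume_Ioc,
    sub_zero, ENNReal.toReal_ofReal hMpos.le] at hjensen
  simp only [smul_eq_mul, mul_one] at hjensen
  have hfinal : -Real.log M ≤ ∫ t in Ioc (0:ℝ) M, a t * Real.log (a t) := by
    have h2 : M⁻¹ * Real.log M⁻¹ ≤ M⁻¹ * ∫ t in Ioc (0:ℝ) M, a t * Real.log (a t) := hjensen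
    have := (mul_le_mul_iff_right₀ (inv_pos.mpr hMpos)).mp h2
    rwa [Real.log_inv] at this
  rw [hint_eq]
  exact hfinal

lemma layered_aux_upper (μ : Measure α) [SigmaFinite μ] (f : α → ℝ)
    (hf : Measurable f) (hf0 : ∀ z, 0 ≤ f z)
    (hf1 : ∫⁻ z, ENNReal.ofReal (f z) ∂μ = 1)
    (hfin : ∀ t > 0, μ {z | t ≤ f z} < ⊤)
    (hLint : IntegrableOn
      (fun t => (μ {z | t ≤ f z}).toReal * Real.log (μ {z | t ≤ f z}).toReal)
      (Set.Ioi (0:ℝ)) volume)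
    (hhint : Integrable (fun z => f z * Real.log (f z)) μ) :
    ∫ t in Set.Ioi (0:ℝ), (μ {z | t ≤ f z}).toReal * Real.log (μ {z | t ≤ f z}).toReal
      ≤ -∫ z, f z * Real.log (f z) ∂μ := by
  set A : ℝ → ℝ≥0∞ := fun t => μ {z | t ≤ f z} with hA
  set a : ℝ → ℝ := fun t => (A t).toReal with ha
  have hAanti : Antitone A := layered_meas_antitone f μ
  have hAm : Measurable A := hAanti.measurable
  have ham : Measurable a := hAm.ennreal_toReal
  have hSm : ∀ t : ℝ, MeasurableSet {z | t ≤ f z} := fun t => hf measurableSet_Ici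
  have hlayer : ∫⁻ t in Ioi (0:ℝ), A t = 1 := by
    rw [← lintegral_eq_lintegral_meas_le μ (Filter.Eventually.of_forall hf0) hf.aemeasurable]
    exact hf1
  set π : Measure (α × ℝ) := μ.prod volume with hπ
  set U : Set (α × ℝ) := {p | 0 < p.2 ∧ p.2 ≤ f p.1} with hU
  have hUm : MeasurableSet U :=
    (measurableSet_lt measurable_const measurable_snd).inter
      (measurableSet_le measurable_snd (hf.comp measurable_fst))
  have hUvol : π U = 1 := by
    rw [hπ, Measure.prod_apply hUm]
    have hsl : ∀ z : α, (volume (Prod.mk z ⁻¹' U)) = ENNReal.ofReal (f z) := by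
      intro z
      rw [show Prod.mk z ⁻¹' U = Ioc 0 (f z) from rfl, Real.volume_Ioc, sub_zero]
    simp_rw [hsl]
    exact hf1
  -- indicator slicing helpers
  have hind1 : ∀ (g : α × ℝ → ℝ) (z : α) (t : ℝ),
      U.indicator g (z, t) = (Ioc 0 (f z)).indicator (fun s => g (z, s)) t := by
    intro g z t
    by_cases h : (z, t) ∈ U
    · have h' : t ∈ Ioc 0 (f z) := ⟨h.1, h.2⟩
      rw [Set.indicator_of_mem h, Set.indicator_of_mem h']
    · have h' : t ∉ Ioc 0 (f z) := fun hc => h ⟨hc.1, hc.2⟩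
      rw [Set.indicator_of_notMem h, Set.indicator_of_notMem h']
  have hind2 : ∀ (g : α × ℝ → ℝ) (t : ℝ) (z : α),
      U.indicator g (z, t)
        = if 0 < t then ({z | t ≤ f z}).indicator (fun x => g (x, t)) z else 0 := by
    intro g t z
    by_cases ht : 0 < t
    · by_cases hz : t ≤ f z
      · have h1 : (z, t) ∈ U := ⟨ht, hz⟩
        have h2 : z ∈ {x | t ≤ f x} := hz
        rw [if_pos ht, Set.indicator_of_mem h1, Set.indicator_of_mem h2]
      · have h1 : (z, t) ∉ U := fun h => hz h.2
        have h2 : z ∉ {x | t ≤ f x} := hz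
        rw [if_pos ht, Set.indicator_of_notMem h1, Set.indicator_of_notMem h2]
    · have h1 : (z, t) ∉ U := fun h => ht h.1
      rw [if_neg ht, Set.indicator_of_notMem h1]
  -- F1 : log (f z)
  have habs : Integrable (fun z => f z * |Real.log (f z)|) μ := by
    have := hhint.abs
    simpa [abs_mul, abs_of_nonneg (hf0 _)] using this
  have hF1meas : AEStronglyMeasurable (U.indicator fun p : α × ℝ => Real.log (f p.1)) π :=
    ((Real.measurable_log.comp (hf.comp measurable_fst)).indicator hUm).aestronglyMeasurable
  have hF1slice : ∀ z : α, (fun t => U.indicator (fun p : α × ℝ => Real.log (f p.1)) (z, t))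
      = (Ioc 0 (f z)).indicator (fun _ => Real.log (f z)) :=
    fun z => funext fun t => hind1 _ z t
  have hF1int : Integrable (U.indicator fun p : α × ℝ => Real.log (f p.1)) π := by
    rw [hπ, integrable_prod_iff hF1meas]
    constructor
    · refine Filter.Eventually.of_forall (fun z => ?_)
      rw [hF1slice z]
      exact (integrableOn_const measure_Ioc_lt_top.ne).integrable_indicator
        measurableSet_Ioc
    · have heq : (fun z => ∫ t, ‖U.indicator (fun p : α × ℝ => Real.log (f p.1)) (z, t)‖)
          = fun z => f z * |Real.log (f z)| := by
        funext z
        have : (fun t => ‖U.indicator (fun p : α × ℝ => Real.log (f p.1)) (z, t)‖)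
            = (Ioc 0 (f z)).indicator (fun _ => ‖Real.log (f z)‖) := by
          funext t
          rw [norm_indicator_eq_indicator_norm, hind1]
        rw [this, integral_indicator_const _ measurableSet_Ioc, measureReal_def, Real.volume_Ioc, sub_zero,
          smul_eq_mul, ENNReal.toReal_ofReal (hf0 z), Real.norm_eq_abs]
      rw [heq]
      exact habs
  have hF1val : ∫ p, U.indicator (fun p : α × ℝ => Real.log (f p.1)) p ∂π
      = ∫ z, f z * Real.log (f z) ∂μ := by
    rw [hπ, integral_prod _ (hπ ▸ hF1int)]
    refine integral_congr_ae (Filter.Eventually.of_forall (fun z => ?_))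
    dsimp only
    rw [hF1slice z, integral_indicator_const _ measurableSet_Ioc, measureReal_def, Real.volume_Ioc, sub_zero,
      smul_eq_mul, ENNReal.toReal_ofReal (hf0 z)]
  -- F2 : log (a t)
  have habs2 : IntegrableOn (fun t => a t * |Real.log (a t)|) (Ioi (0:ℝ)) volume := by
    have := hLint.abs
    exact (by simpa [abs_mul, abs_of_nonneg (ENNReal.toReal_nonneg)] using this : Integrable (fun t => (μ {z | t ≤ f z}).toReal * |Real.log (μ {z | t ≤ f z}).toReal|) (volume.restrict (Ioi 0)))
  have hF2meas : AEStronglyMeasurable (U.indicator fun p : α × ℝ => Real.log (a p.2)) π :=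
    ((Real.measurable_log.comp (ham.comp measurable_snd)).indicator hUm).aestronglyMeasurable
  have hF2int : Integrable (U.indicator fun p : α × ℝ => Real.log (a p.2)) π := by
    rw [hπ, integrable_prod_iff' (hπ ▸ hF2meas)]
    constructor
    · refine Filter.Eventually.of_forall (fun t => ?_)
      have heq : (fun z => U.indicator (fun p : α × ℝ => Real.log (a p.2)) (z, t))
          = fun z => if 0 < t then ({z | t ≤ f z}).indicator (fun _ => Real.log (a t)) z else 0 :=
        funext fun z => hind2 _ t z
      rw [heq]
      by_cases ht : 0 < t
      · simp only [if_pos ht]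
        exact (integrableOn_const (hfin t ht).ne).integrable_indicator (hSm t)
      · simp only [if_neg ht]
        exact integrable_zero _ _ _
    · have heq : (fun t => ∫ z, ‖U.indicator (fun p : α × ℝ => Real.log (a p.2)) (z, t)‖ ∂μ)
          = (Ioi (0:ℝ)).indicator (fun t => a t * |Real.log (a t)|) := by
        funext t
        by_cases ht : 0 < t
        · rw [Set.indicator_of_mem (Set.mem_Ioi.mpr ht)]
          have : (fun z => ‖U.indicator (fun p : α × ℝ => Real.log (a p.2)) (z, t)‖)
              = ({z | t ≤ f z}).indicator (fun _ => ‖Real.log (a t)‖) := by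
            funext z
            rw [norm_indicator_eq_indicator_norm, hind2, if_pos ht]
          rw [this, integral_indicator_const _ (hSm t), measureReal_def, smul_eq_mul, Real.norm_eq_abs]
        · rw [Set.indicator_of_notMem (fun hc => ht (Set.mem_Ioi.mp hc))]
          have : (fun z => ‖U.indicator (fun p : α × ℝ => Real.log (a p.2)) (z, t)‖)
              = fun _ => (0:ℝ) := by
            funext z
            rw [norm_indicator_eq_indicator_norm, hind2, if_neg ht]
          rw [this, integral_zero]
      rw [heq]
      exact habs2.integrable_indicator measurableSet_Ioi
  have hF2val : ∫ p, U.indicator (fun p : α × ℝ => Real.log (a p.2)) p ∂π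
      = ∫ t in Ioi (0:ℝ), a t * Real.log (a t) := by
    rw [hπ, integral_prod_symm _ (hπ ▸ hF2int)]
    have hzs : ∀ t : ℝ, ∫ z, U.indicator (fun p : α × ℝ => Real.log (a p.2)) (z, t) ∂μ
        = (Ioi (0:ℝ)).indicator (fun t => a t * Real.log (a t)) t := by
      intro t
      by_cases ht : 0 < t
      · have heq : (fun z => U.indicator (fun p : α × ℝ => Real.log (a p.2)) (z, t))
            = ({z | t ≤ f z}).indicator (fun _ => Real.log (a t)) :=
          funext fun z => by rw [hind2, if_pos ht]
        rw [heq, integral_indicator_const _ (hSm t), measureReal_def, Set.indicator_of_mem (Set.mem_Ioi.mpr ht), smul_eq_mul]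
      · have heq : (fun z => U.indicator (fun p : α × ℝ => Real.log (a p.2)) (z, t))
            = fun _ => (0:ℝ) :=
          funext fun z => by rw [hind2, if_neg ht]
        rw [heq, integral_zero, Set.indicator_of_notMem (fun hc => ht (Set.mem_Ioi.mp hc))]
    have hzs' : (fun t => ∫ z, U.indicator (fun p : α × ℝ => Real.log (a p.2)) (z, t) ∂μ)
        = (Ioi (0:ℝ)).indicator (fun t => a t * Real.log (a t)) := funext hzs
    rw [show (∫ t, ∫ z, U.indicator (fun p : α × ℝ => Real.log (a p.2)) (z, t) ∂μ)
        = ∫ t, (Ioi (0:ℝ)).indicator (fun t => a t * Real.log (a t)) t from by rw [← hzs'],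
      integral_indicator measurableSet_Ioi]
  -- G
  set G : α × ℝ → ℝ := fun p => a p.2 * f p.1 with hG
  have hGmeas : Measurable G := (ham.comp measurable_snd).mul (hf.comp measurable_fst)
  have hGnonneg : ∀ p, 0 ≤ G p := fun p => mul_nonneg ENNReal.toReal_nonneg (hf0 _)
  have hGindnonneg : ∀ p, 0 ≤ U.indicator G p :=
    fun p => Set.indicator_nonneg (fun q _ => hGnonneg q) p
  have hGlint : ∫⁻ p, ENNReal.ofReal (U.indicator G p) ∂π ≤ 1 := by
    have heq : (fun p => ENNReal.ofReal (U.indicator G p))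
        = U.indicator (fun p => ENNReal.ofReal (G p)) := by
      funext p
      by_cases h : p ∈ U
      · rw [Set.indicator_of_mem h, Set.indicator_of_mem h]
      · rw [Set.indicator_of_notMem h, Set.indicator_of_notMem h, ENNReal.ofReal_zero]
    rw [heq, hπ, lintegral_prod_symm _
      ((hGmeas.ennreal_ofReal.indicator hUm).aemeasurable)]
    have hin : ∀ t : ℝ, ∫⁻ z, U.indicator (fun p => ENNReal.ofReal (G p)) (z, t) ∂μ
        ≤ (Ioi (0:ℝ)).indicator A t := by
      intro t
      by_cases ht : 0 < t
      · have heq2 : ∀ z, U.indicator (fun p => ENNReal.ofReal (G p)) (z, t)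
            = ({z | t ≤ f z}).indicator
                (fun z => ENNReal.ofReal (a t) * ENNReal.ofReal (f z)) z := by
          intro z
          by_cases hz : t ≤ f z
          · have h1 : (z, t) ∈ U := ⟨ht, hz⟩
            have h2 : z ∈ {x | t ≤ f x} := hz
            rw [Set.indicator_of_mem h1, Set.indicator_of_mem h2,
              ENNReal.ofReal_mul ENNReal.toReal_nonneg]
          · have h1 : (z, t) ∉ U := fun h => hz h.2
            have h2 : z ∉ {x | t ≤ f x} := hz
            rw [Set.indicator_of_notMem h1, Set.indicator_of_notMem h2]
        simp_rw [heq2]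
        rw [lintegral_indicator (hSm t) _, Set.indicator_of_mem (Set.mem_Ioi.mpr ht)]
        calc ∫⁻ z in {z | t ≤ f z}, ENNReal.ofReal (a t) * ENNReal.ofReal (f z) ∂μ
            = ENNReal.ofReal (a t) * ∫⁻ z in {z | t ≤ f z}, ENNReal.ofReal (f z) ∂μ :=
              lintegral_const_mul _ (ENNReal.measurable_ofReal.comp hf)
          _ ≤ A t * 1 := by
              apply mul_le_mul'
              · rw [ha, ENNReal.ofReal_toReal (hfin t ht).ne]
              · rw [← hf1]
                exact setLIntegral_le_lintegral _ _
          _ = A t := mul_one _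
      · have heq2 : ∀ z, U.indicator (fun p => ENNReal.ofReal (G p)) (z, t) = 0 :=
          fun z => Set.indicator_of_notMem (fun h : (z, t) ∈ U => ht h.1) _
        simp_rw [heq2]
        simp [Set.indicator_of_notMem (fun hc => ht (Set.mem_Ioi.mp hc))]
    calc ∫⁻ t, ∫⁻ z, U.indicator (fun p => ENNReal.ofReal (G p)) (z, t) ∂μ
          ≤ ∫⁻ t, (Ioi (0:ℝ)).indicator A t := lintegral_mono hin
      _ = ∫⁻ t in Ioi (0:ℝ), A t := lintegral_indicator measurableSet_Ioi _
      _ = 1 := hlayer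
  have hGint : Integrable (U.indicator G) π := by
    refine ⟨(hGmeas.indicator hUm).aestronglyMeasurable, ?_⟩
    rw [hasFiniteIntegral_iff_ofReal (Filter.Eventually.of_forall hGindnonneg)]
    exact lt_of_le_of_lt hGlint ENNReal.one_lt_top
  have hGval : ∫ p, U.indicator G p ∂π ≤ 1 := by
    rw [integral_eq_lintegral_of_nonneg_ae (Filter.Eventually.of_forall hGindnonneg)
      (hGmeas.indicator hUm).aestronglyMeasurable]
    calc (∫⁻ p, ENNReal.ofReal (U.indicator G p) ∂π).toReal
        ≤ (1 : ℝ≥0∞).toReal := ENNReal.toReal_mono ENNReal.one_ne_top hGlint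
      _ = 1 := ENNReal.toReal_one
  -- a.e. positivity on U
  set N : Set (α × ℝ) := {p | (0 < p.2 ∧ p.2 ≤ f p.1) ∧ A p.2 = 0} with hN
  have hNm : MeasurableSet N :=
    hUm.inter ((hAm.comp measurable_snd) (measurableSet_singleton 0))
  have hN0 : π N = 0 := by
    rw [hπ, Measure.prod_apply_symm hNm]
    have hsl : ∀ t : ℝ, μ ((fun z => (z, t)) ⁻¹' N) = 0 := by
      intro t
      by_cases h : 0 < t ∧ A t = 0
      · exact measure_mono_null (fun z hz => hz.1.2) h.2
      · have : (fun z => (z, t)) ⁻¹' N = ∅ := by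
          ext z
          simp only [mem_preimage, mem_empty_iff_false, iff_false]
          intro hz
          exact h ⟨hz.1.1, hz.2⟩
        rw [this, measure_empty]
    simp_rw [hsl]
    simp
  have hposae : ∀ᵐ p ∂(π.restrict U), 0 < a p.2 ∧ 0 < f p.1 := by
    have h1 : ∀ᵐ p ∂(π.restrict U), p ∈ U := ae_restrict_mem hUm
    have h2 : ∀ᵐ p ∂(π.restrict U), p ∉ N :=
      ae_restrict_of_ae (measure_eq_zero_iff_ae_notMem.mp hN0)
    filter_upwards [h1, h2] with p hpU hpN
    have ht : 0 < p.2 := hpU.1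
    refine ⟨ENNReal.toReal_pos (fun h0 => hpN ⟨hpU, h0⟩) (hfin p.2 ht).ne, lt_of_lt_of_le ht hpU.2⟩
  -- main comparison
  have intF1 : IntegrableOn (fun p : α × ℝ => Real.log (f p.1)) U π :=
    (integrable_indicator_iff hUm).mp hF1int
  have intF2 : IntegrableOn (fun p : α × ℝ => Real.log (a p.2)) U π :=
    (integrable_indicator_iff hUm).mp hF2int
  have intG : IntegrableOn G U π := (integrable_indicator_iff hUm).mp hGint
  have intC : IntegrableOn (fun _ : α × ℝ => (1:ℝ)) U π :=
    integrableOn_const (by rw [hUvol]; exact ENNReal.one_ne_top)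
  have key : ∫ p in U, (Real.log (a p.2) + Real.log (f p.1)) ∂π
      ≤ ∫ p in U, (G p - 1) ∂π := by
    refine integral_mono_ae (intF2.add intF1) (intG.sub intC) ?_
    filter_upwards [hposae] with p hp
    have h1 : Real.log (a p.2) + Real.log (f p.1) = Real.log (G p) :=
      (Real.log_mul hp.1.ne' hp.2.ne').symm
    rw [h1]
    exact Real.log_le_sub_one_of_pos (mul_pos hp.1 hp.2)
  have hLHS : ∫ p in U, (Real.log (a p.2) + Real.log (f p.1)) ∂π
      = (∫ t in Ioi (0:ℝ), a t * Real.log (a t)) + ∫ z, f z * Real.log (f z) ∂μ := by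
    rw [integral_add intF2 intF1, ← integral_indicator hUm, ← integral_indicator hUm,
      hF2val, hF1val]
  have hRHS : ∫ p in U, (G p - 1) ∂π ≤ 0 := by
    rw [integral_sub intG intC, setIntegral_const, measureReal_def, hUvol, ENNReal.toReal_one, smul_eq_mul,
      one_mul, ← integral_indicator hUm]
    linarith [hGval]
  rw [hLHS] at key
  linarith [le_trans key hRHS]

end aux

/-- Layered entropy `h_L(f) = ∫₀^∞ μ(L_t⁺(f)) log₂ μ(L_t⁺(f)) dt` of a density `f`,
where `L_t⁺(f) = {z : f(z) ≥ t}`. -/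
noncomputable def layeredEntropy {n : ℕ} (f : EuclideanSpace ℝ (Fin n) → ℝ) : ℝ :=
  ∫ t in Set.Ioi (0:ℝ),
    (volume {z | t ≤ f z}).toReal * Real.logb 2 (volume {z | t ≤ f z}).toReal

/-- For a probability density `f` on `ℝⁿ` (with finite superlevel-set measures, finite
essential supremum, and the relevant integrands integrable so all quantities are
well-defined and finite), `h_∞(f) ≤ h_L(f) ≤ h(f)`, where `h_∞(f) = -log₂ (ess sup f)` and
`h(f) = -∫ f log₂ f` is the differential entropy. -/
theorem layered_entropy_bounds {n : ℕ} (f : EuclideanSpace ℝ (Fin n) → ℝ)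
    (hf : Measurable f) (hf0 : ∀ z, 0 ≤ f z)
    (hf1 : ∫⁻ z, ENNReal.ofReal (f z) = 1)
    (hfin : ∀ t > 0, volume {z | t ≤ f z} < ⊤)
    (hess : essSup (fun z => ENNReal.ofReal (f z)) volume ≠ ⊤)
    (hLint : IntegrableOn
      (fun t => (volume {z | t ≤ f z}).toReal * Real.logb 2 (volume {z | t ≤ f z}).toReal)
      (Set.Ioi (0:ℝ)) volume)
    (hhint : Integrable (fun z => f z * Real.logb 2 (f z)) volume) :
    -Real.logb 2 (essSup (fun z => ENNReal.ofReal (f z)) volume).toReal ≤ layeredEntropy f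
      ∧ layeredEntropy f ≤ -∫ z, f z * Real.logb 2 (f z) := by
  have h2 : (0:ℝ) < Real.log 2 := Real.log_pos one_lt_two
  have hmul : ∀ x : ℝ, (x * Real.logb 2 x) * Real.log 2 = x * Real.log x := by
    intro x
    rw [Real.logb]
    field_simp
  have hLint' : IntegrableOn
      (fun t => (volume {z | t ≤ f z}).toReal * Real.log (volume {z | t ≤ f z}).toReal)
      (Set.Ioi (0:ℝ)) volume := by
    have h := hLint.mul_const (Real.log 2)
    have heq : (fun t => ((volume {z | t ≤ f z}).toReal
          * Real.logb 2 (volume {z | t ≤ f z}).toReal) * Real.log 2)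
        = fun t => (volume {z | t ≤ f z}).toReal * Real.log (volume {z | t ≤ f z}).toReal :=
      funext fun t => hmul _
    rwa [heq] at h
  have hhint' : Integrable (fun z => f z * Real.log (f z)) volume := by
    have h := hhint.mul_const (Real.log 2)
    have heq : (fun z => (f z * Real.logb 2 (f z)) * Real.log 2)
        = fun z => f z * Real.log (f z) := funext fun z => hmul _
    rwa [heq] at h
  have low := layered_aux_lower volume f hf hf0 hf1 hfin hess hLint'
  have upp := layered_aux_upper volume f hf hf0 hf1 hfin hLint' hhint'
  have hLE : layeredEntropy f
      = (∫ t in Set.Ioi (0:ℝ),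
          (volume {z | t ≤ f z}).toReal * Real.log (volume {z | t ≤ f z}).toReal)
        / Real.log 2 := by
    unfold layeredEntropy
    rw [show (fun t => (volume {z | t ≤ f z}).toReal
            * Real.logb 2 (volume {z | t ≤ f z}).toReal)
        = fun t => ((volume {z | t ≤ f z}).toReal
            * Real.log (volume {z | t ≤ f z}).toReal) / Real.log 2 from
      funext fun t => by rw [Real.logb]; ring, integral_div]
  have hHE : ∫ z, f z * Real.logb 2 (f z)
      = (∫ z, f z * Real.log (f z)) / Real.log 2 := by
    rw [show (fun z => f z * Real.logb 2 (f z))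
        = fun z => (f z * Real.log (f z)) / Real.log 2 from
      funext fun z => by rw [Real.logb]; ring, integral_div]
  constructor
  · rw [hLE, Real.logb, ← neg_div]
    exact (div_le_div_iff_of_pos_right h2).mpr low
  · rw [hLE, hHE, ← neg_div]
    exact (div_le_div_iff_of_pos_right h2).mpr upp
end

section
/- Let G ∈ ℝ^{n×n} be an invertible matrix defining the lattice GZⁿ, let P be a basic cell of the lattice (i.e., the translates P + Gj for j ∈ Zⁿ partition ℝⁿ), let Q_P : ℝⁿ → GZⁿ map each x to the unique lattice point y with x ∈ -P + y, and let V be uniformly distributed on P. Then for every fixed x ∈ ℝⁿ, the dithered quantization error Q_P(x - V) + V - x is uniformly distributed on P. -/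
open MeasureTheory

/-- Crypto lemma / uniform error property of subtractive dithering. Let `G` be an invertible
`n×n` real matrix defining the lattice `GZⁿ`, let `P` be a basic cell of the lattice
(the translates `P + Gj`, `j ∈ Zⁿ`, partition `ℝⁿ`, expressed via unique existence), and let
`Q_P` map each `x` to the unique lattice point `y` with `x ∈ -P + y` (i.e. `Q_P x - x ∈ P`).
If `V` is uniform on `P`, then for every fixed `x`, the dithered quantization error
`Q_P(x - V) + V - x` is uniform on `P`. -/
theorem dithered_error_uniform {n : ℕ}
    (G : Matrix (Fin n) (Fin n) ℝ) (hG : IsUnit G.det)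
    (P : Set (Fin n → ℝ)) (hPmeas : MeasurableSet P) (hPbd : Bornology.IsBounded P)
    (hPcell : ∀ x : Fin n → ℝ, ∃! j : Fin n → ℤ,
      x - G.mulVec (fun i => (j i : ℝ)) ∈ P)
    (QP : (Fin n → ℝ) → (Fin n → ℝ)) (hQPmeas : Measurable QP)
    (hQPlat : ∀ x, ∃ j : Fin n → ℤ, QP x = G.mulVec (fun i => (j i : ℝ)))
    (hQPcell : ∀ x, QP x - x ∈ P)
    (x : Fin n → ℝ) :
    Measure.map (fun v => QP (x - v) + v - x) ((volume P)⁻¹ • volume.restrict P)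
      = (volume P)⁻¹ • volume.restrict P := by
  classical
  set L : (Fin n → ℤ) → (Fin n → ℝ) := fun j => G.mulVec (fun i => (j i : ℝ)) with hLdef
  have hGmv : Function.Injective (G.mulVec : (Fin n → ℝ) → (Fin n → ℝ)) := by
    haveI := G.invertibleOfIsUnitDet hG
    exact Matrix.mulVec_injective_of_invertible G
  have hLinj : Function.Injective L := by
    intro a b hab
    have h2 : (fun i => ((a i : ℝ))) = (fun i => ((b i : ℝ))) := hGmv hab
    funext i
    exact_mod_cast congrFun h2 i
  have hLneg : ∀ j, L (-j) = - L j := by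
    intro j
    show G.mulVec _ = _
    rw [show (fun i => (((-j) i : ℝ))) = -(fun i => ((j i : ℝ))) by
      funext i; simp]
    exact Matrix.mulVec_neg ..
  have hQ : ∀ z (j : Fin n → ℤ), L j - z ∈ P → QP z = L j := by
    intro z j hj
    obtain ⟨jz, hjz⟩ := hQPlat z
    have h1 : L jz - z ∈ P := by
      simp only [hLdef]; rw [← hjz]; exact hQPcell z
    have e1 : (-z) - L (-jz) ∈ P := by
      rw [hLneg]
      have : (-z) - (- L jz) = L jz - z := by abel
      rw [this]; exact h1
    have e2 : (-z) - L (-j) ∈ P := by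
      rw [hLneg]
      have : (-z) - (- L j) = L j - z := by abel
      rw [this]; exact hj
    have huniq := (hPcell (-z)).unique e1 e2
    have hjz' : jz = j := neg_injective huniq
    rw [hjz, hjz']
  set f : (Fin n → ℝ) → (Fin n → ℝ) := fun v => QP (x - v) + v - x with hfdef
  have hfmeas : Measurable f := by
    apply Measurable.sub _ measurable_const
    exact (hQPmeas.comp (measurable_const.sub measurable_id)).add measurable_id
  have hfP : ∀ v, f v ∈ P := by
    intro v
    have h := hQPcell (x - v)
    have : QP (x - v) - (x - v) = f v := by simp only [hfdef]; abel
    rwa [this] at h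
  have key : Measure.map f (volume.restrict P) = volume.restrict P := by
    ext A hA
    rw [Measure.map_apply hfmeas hA, Measure.restrict_apply hA,
        Measure.restrict_apply (hfmeas hA)]
    set T : (Fin n → ℤ) → Set (Fin n → ℝ) :=
      fun j => A ∩ P ∩ {w | w + x - L j ∈ P} with hTdef
    have hTmeas : ∀ j, MeasurableSet (T j) :=
      fun j => (hA.inter hPmeas).inter
        (hPmeas.preimage ((measurable_id.add_const x).sub_const (L j)))
    have hTdisj : Pairwise (Function.onFun Disjoint T) := by
      intro j j' hjj'
      refine Set.disjoint_left.mpr fun w hw hw' => hjj' ?_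
      exact (hPcell (w + x)).unique hw.2 hw'.2
    have hTunion : A ∩ P = ⋃ j, T j := by
      ext w
      constructor
      · rintro ⟨hwA, hwP⟩
        obtain ⟨j, hj, -⟩ := hPcell (w + x)
        exact Set.mem_iUnion.mpr ⟨j, ⟨hwA, hwP⟩, hj⟩
      · rintro hw
        obtain ⟨j, hj⟩ := Set.mem_iUnion.mp hw
        exact hj.1
    set S : (Fin n → ℤ) → Set (Fin n → ℝ) :=
      fun j => (fun v => v + (L j - x)) ⁻¹' T j with hSdef
    have hSmeas : ∀ j, MeasurableSet (S j) :=
      fun j => (hTmeas j).preimage (measurable_id.add_const _)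
    -- membership characterization of S j
    have hSchar : ∀ j v, v ∈ S j ↔ v ∈ P ∧ QP (x - v) = L j ∧ f v ∈ A := by
      intro j v
      simp only [hSdef, hTdef, Set.mem_preimage, Set.mem_inter_iff, Set.mem_setOf_eq]
      constructor
      · rintro ⟨⟨hwA, hwP⟩, hw2⟩
        have hv : v + (L j - x) + x - L j = v := by abel
        rw [hv] at hw2
        have hQP : QP (x - v) = L j := by
          apply hQ
          have : L j - (x - v) = v + (L j - x) := by abel
          rw [this]; exact hwP
        have hfv : f v = v + (L j - x) := by
          simp only [hfdef, hQP]; abel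
        exact ⟨hw2, hQP, by rwa [hfv]⟩
      · rintro ⟨hvP, hQP, hfA⟩
        have hfv : f v = v + (L j - x) := by
          simp only [hfdef, hQP]; abel
        refine ⟨⟨?_, ?_⟩, ?_⟩
        · rw [← hfv]; exact hfA
        · rw [← hfv]; exact hfP v
        · have : v + (L j - x) + x - L j = v := by abel
          rwa [this]
    have hSdisj : Pairwise (Function.onFun Disjoint S) := by
      intro j j' hjj'
      refine Set.disjoint_left.mpr fun v hv hv' => hjj' ?_
      have h1 := ((hSchar j v).mp hv).2.1
      have h2 := ((hSchar j' v).mp hv').2.1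
      exact hLinj (h1 ▸ h2 ▸ rfl)
    have hSunion : f ⁻¹' A ∩ P = ⋃ j, S j := by
      ext v
      constructor
      · rintro ⟨hvA, hvP⟩
        obtain ⟨j, hj⟩ := hQPlat (x - v)
        exact Set.mem_iUnion.mpr ⟨j, (hSchar j v).mpr ⟨hvP, hj, hvA⟩⟩
      · intro hv
        obtain ⟨j, hj⟩ := Set.mem_iUnion.mp hv
        obtain ⟨hvP, -, hfA⟩ := (hSchar j v).mp hj
        exact ⟨hfA, hvP⟩
    calc volume (f ⁻¹' A ∩ P) = ∑' j, volume (S j) := by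
          rw [hSunion, measure_iUnion hSdisj hSmeas]
      _ = ∑' j, volume (T j) := by
          refine tsum_congr fun j => ?_
          exact measure_preimage_add_right volume (L j - x) (T j)
      _ = volume (A ∩ P) := by rw [hTunion, measure_iUnion hTdisj hTmeas]
  rw [Measure.map_smul, key]
end

section
/- Let V be a chi-squared random variable with n+2 degrees of freedom, and conditionally on V = v, let Z be uniformly distributed on the ball √v · B^n ⊆ ℝⁿ. Then Z follows the standard multivariate Gaussian distribution N(0, I_n). -/
open MeasureTheory Real

lemma integral_exp_neg_div_two_Ioi (s : ℝ) :
    ∫ x in Set.Ioi s, Real.exp (-x / 2) = 2 * Real.exp (-s / 2) := by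
  have h := integral_comp_mul_right_Ioi (fun y => Real.exp (-y)) s (b := (2:ℝ)⁻¹)
    (by norm_num)
  simp only [smul_eq_mul] at h
  have h1 : ∀ x : ℝ, -x / 2 = -(x * 2⁻¹) := by intro x; ring
  rw [show (∫ x in Set.Ioi s, Real.exp (-x / 2)) =
      ∫ x in Set.Ioi s, Real.exp (-(x * 2⁻¹)) by simp_rw [h1]]
  rw [h, integral_exp_neg_Ioi]
  rw [show -(s * 2⁻¹) = -s / 2 by ring]
  norm_num

/-- A standard Gaussian on `ℝⁿ` is a mixture of uniform distributions on balls, with the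
squared radius following a chi-squared distribution with `n+2` degrees of freedom:
for every `z`, the mixture density
`∫₀^∞ f_V(v) · 1{‖z‖² ≤ v} / (v^{n/2} κ_n) dv` equals `(2π)^{-n/2} e^{-‖z‖²/2}`, where
`f_V(v) = v^{n/2} e^{-v/2} / (2^{(n+2)/2} Γ((n+2)/2))` is the χ²_{n+2} density and
`κ_n` is the volume of the unit ball. -/
theorem gaussian_mixture_of_uniform_balls (n : ℕ) (hn : 1 ≤ n)
    (z : EuclideanSpace ℝ (Fin n)) :
    ∫ v in Set.Ioi (0:ℝ),
        (v ^ ((n : ℝ) / 2) * Real.exp (-v / 2)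
            / (2 ^ (((n : ℝ) + 2) / 2) * Real.Gamma (((n : ℝ) + 2) / 2)))
          * (if ‖z‖ ^ 2 ≤ v then 1 else 0)
          / (v ^ ((n : ℝ) / 2)
              * (volume (Metric.closedBall (0 : EuclideanSpace ℝ (Fin n)) 1)).toReal)
      = (2 * π) ^ (-(n : ℝ) / 2) * Real.exp (-‖z‖ ^ 2 / 2) := by
  have : Nonempty (Fin n) := ⟨⟨0, hn⟩⟩
  set s : ℝ := ‖z‖ ^ 2 with hs
  have hs0 : 0 ≤ s := sq_nonneg _
  -- volume of the unit ball
  have hΓpos : 0 < Real.Gamma ((n : ℝ) / 2 + 1) :=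
    Real.Gamma_pos_of_pos (by positivity)
  have hκ : (volume (Metric.closedBall (0 : EuclideanSpace ℝ (Fin n)) 1)).toReal
      = Real.sqrt π ^ n / Real.Gamma ((n : ℝ) / 2 + 1) := by
    rw [EuclideanSpace.volume_closedBall]
    simp only [Fintype.card_fin, ENNReal.ofReal_one, one_pow, one_mul]
    rw [ENNReal.toReal_ofReal (by positivity)]
  set κ : ℝ := (volume (Metric.closedBall (0 : EuclideanSpace ℝ (Fin n)) 1)).toReal
  have hκpos : 0 < κ := by rw [hκ]; positivity
  set C : ℝ := 2 ^ (((n : ℝ) + 2) / 2) * Real.Gamma (((n : ℝ) + 2) / 2) * κ with hC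
  have hΓeq : Real.Gamma (((n : ℝ) + 2) / 2) = Real.Gamma ((n : ℝ) / 2 + 1) := by
    norm_num [add_div]
  have hCpos : 0 < C := by
    rw [hC, hΓeq]
    have : (0:ℝ) < (2:ℝ) ^ (((n : ℝ) + 2) / 2) := Real.rpow_pos_of_pos (by norm_num) _
    positivity
  -- step 1: simplify the integrand on Ioi 0
  have step1 : ∫ v in Set.Ioi (0:ℝ),
        (v ^ ((n : ℝ) / 2) * Real.exp (-v / 2)
            / (2 ^ (((n : ℝ) + 2) / 2) * Real.Gamma (((n : ℝ) + 2) / 2)))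
          * (if s ≤ v then 1 else 0) / (v ^ ((n : ℝ) / 2) * κ)
      = ∫ v in Set.Ioi (0:ℝ), Set.indicator (Set.Ici s) (fun v => Real.exp (-v / 2) / C) v := by
    apply setIntegral_congr_fun measurableSet_Ioi
    intro v hv
    have hvpos : (0:ℝ) < v := hv
    have hvp : (0:ℝ) < v ^ ((n : ℝ) / 2) := Real.rpow_pos_of_pos hvpos _
    by_cases h : s ≤ v
    · rw [Set.indicator_of_mem (Set.mem_Ici.mpr h)]
      simp only [if_pos h, mul_one, hC]
      field_simp
    · rw [Set.indicator_of_notMem (by simpa using h)]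
      simp [if_neg h]
  rw [step1]
  -- step 2: reduce to an integral over Ioi s
  rw [setIntegral_indicator measurableSet_Ici]
  have hset : (Set.Ioi 0 ∩ Set.Ici s : Set ℝ) =ᵐ[volume] (Set.Ioi s : Set ℝ) := by
    rcases eq_or_lt_of_le hs0 with h0 | h0
    · rw [← h0]
      have : Set.Ioi (0:ℝ) ∩ Set.Ici 0 = Set.Ioi 0 := by
        ext x; simp (config := {contextual := true}) [le_of_lt]
      rw [this]
      exact Filter.EventuallyEq.rfl
    · have : Set.Ioi 0 ∩ Set.Ici s = Set.Ici s := by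
        ext x; simp only [Set.mem_inter_iff, Set.mem_Ioi, Set.mem_Ici]
        exact ⟨fun h => h.2, fun h => ⟨lt_of_lt_of_le h0 h, h⟩⟩
      rw [this]
      exact Ioi_ae_eq_Ici.symm
  rw [setIntegral_congr_set hset]
  -- step 3: compute the exponential integral
  rw [show (∫ v in Set.Ioi s, Real.exp (-v / 2) / C)
      = (∫ v in Set.Ioi s, Real.exp (-v / 2)) / C by rw [integral_div]]
  rw [integral_exp_neg_div_two_Ioi]
  -- step 4: algebra
  rw [hC, hΓeq, hκ]
  have hsqrt : Real.sqrt π ^ n = π ^ ((n : ℝ) / 2) := by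
    rw [Real.sqrt_eq_rpow, ← Real.rpow_natCast (π ^ ((1:ℝ)/2)) n, ← Real.rpow_mul pi_pos.le]
    ring_nf
  have h2 : (2:ℝ) ^ (((n : ℝ) + 2) / 2) = 2 ^ ((n : ℝ) / 2) * 2 := by
    rw [add_div, Real.rpow_add (by norm_num)]
    norm_num
  rw [hsqrt, h2]
  have hmul : (2 * π) ^ (-(n : ℝ) / 2)
      = (2 ^ ((n : ℝ) / 2) * π ^ ((n : ℝ) / 2))⁻¹ := by
    rw [← Real.mul_rpow (by norm_num) pi_pos.le, neg_div,
      Real.rpow_neg (by positivity)]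
  rw [hmul]
  have h2p : (0:ℝ) < (2:ℝ) ^ ((n : ℝ) / 2) := Real.rpow_pos_of_pos (by norm_num) _
  have hπp : (0:ℝ) < π ^ ((n : ℝ) / 2) := Real.rpow_pos_of_pos pi_pos _
  field_simp
end

section
/- For every integer n ≥ 2, the gap between the two rate-distortion lower bounds satisfies (1/2) log₂(2πe/(n+2)) - (1/n) log₂ κ_n ≤ (log₂ n)/(2n) - 0.05/n, where κ_n = π^{n/2}/Γ(n/2+1) is the volume of the unit n-ball. -/
open Real

lemma quad_log {t : ℝ} (ht : 0 ≤ t) : t - t^2/2 ≤ Real.log (1+t) := by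
  set f : ℝ → ℝ := fun s => Real.log (1+s) - s + s^2/2 with hf
  have hder : ∀ x : ℝ, 0 < x → HasDerivAt f ((1+x)⁻¹ - 1 + x) x := by
    intro x hx
    have h1 : HasDerivAt (fun s : ℝ => 1 + s) 1 x := by
      simpa using (hasDerivAt_id x).const_add (1:ℝ)
    have h2 : HasDerivAt (fun s : ℝ => Real.log (1+s)) ((1+x)⁻¹) x := by
      have := (Real.hasDerivAt_log (by positivity : (1:ℝ)+x ≠ 0)).comp x h1
      rw [mul_one] at this; exact this
    have h3 : HasDerivAt (fun s : ℝ => s^2/2) x x := by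
      simpa using (hasDerivAt_pow 2 x).div_const 2
    exact (h2.sub (hasDerivAt_id x)).add h3
  have hmono : MonotoneOn f (Set.Ici (0:ℝ)) := by
    apply monotoneOn_of_deriv_nonneg (convex_Ici 0)
    · intro x hx
      have hx' : (0:ℝ) < 1 + x := by
        have : (0:ℝ) ≤ x := hx
        linarith
      exact (((Real.continuousAt_log (by linarith)).comp (by continuity : Continuous fun s : ℝ => 1+s).continuousAt).sub continuous_id.continuousAt).add ((continuous_pow 2).div_const 2).continuousAt |>.continuousWithinAt
    · intro x hx
      rw [interior_Ici] at hx
      replace hx : 0 < x := hx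
      exact ((hder x hx).differentiableAt).differentiableWithinAt
    · intro x hx
      rw [interior_Ici] at hx
      replace hx : 0 < x := hx
      rw [(hder x hx).deriv]
      have h1x : (0:ℝ) < 1 + x := by linarith
      have : (1+x)⁻¹ - 1 + x = x^2/(1+x) := by field_simp; ring
      rw [this]; positivity
  have h0 : f 0 ≤ f t := hmono Set.self_mem_Ici ht ht
  simp only [hf] at h0
  norm_num at h0
  linarith

lemma log_factorial_le {m : ℕ} (hm : 1 ≤ m) :
    Real.log (m.factorial) ≤ m * Real.log m - m + Real.log m / 2 + 1 := by
  have hm0 : (0:ℝ) < m := by exact_mod_cast hm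
  have hst : Stirling.stirlingSeq m ≤ Real.exp 1 / Real.sqrt 2 := by
    have h := Stirling.stirlingSeq'_antitone (Nat.zero_le (m-1))
    simp only [Function.comp] at h
    rw [Nat.succ_eq_add_one, Nat.succ_eq_add_one, Nat.sub_add_cancel hm] at h
    simpa [Stirling.stirlingSeq_one] using h
  have hden : 0 < Real.sqrt (2*(m:ℝ)) * ((m:ℝ)/Real.exp 1)^m := by positivity
  have hfact : (m.factorial : ℝ) ≤ (Real.exp 1 / Real.sqrt 2) * (Real.sqrt (2*(m:ℝ)) * ((m:ℝ)/Real.exp 1)^m) := by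
    have := (div_le_iff₀ hden).mp (by simpa [Stirling.stirlingSeq] using hst)
    linarith
  have hlog := Real.log_le_log (by positivity) hfact
  rw [Real.log_mul (by positivity) (by positivity), Real.log_mul (by positivity) (by positivity),
    Real.log_div (by positivity) (by positivity), Real.log_exp,
    Real.log_sqrt (by norm_num), Real.log_sqrt (by positivity),
    Real.log_pow, Real.log_mul (by norm_num) (by positivity),
    Real.log_div (by positivity) (by positivity), Real.log_exp] at hlog
  calc Real.log (m.factorial) ≤ _ := hlog
    _ = m * Real.log m - m + Real.log m / 2 + 1 := by ring

lemma gamma_half_le (m : ℕ) :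
    Real.log (Real.Gamma ((m:ℝ) + 3/2)) ≤ (Real.log m.factorial + Real.log (m+1).factorial)/2 := by
  have hc := Real.convexOn_log_Gamma
  have h := hc.2 (x := (m:ℝ)+1) (y := (m:ℝ)+2) (by simp [Set.mem_Ioi]; positivity)
    (by simp [Set.mem_Ioi]; positivity) (by norm_num : (0:ℝ) ≤ 1/2) (by norm_num : (0:ℝ) ≤ 1/2)
    (by norm_num)
  have harg : (1/2:ℝ) • ((m:ℝ)+1) + (1/2:ℝ) • ((m:ℝ)+2) = (m:ℝ) + 3/2 := by
    simp [smul_eq_mul]; ring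
  rw [harg] at h
  simp only [Function.comp, smul_eq_mul] at h
  have h1 : Real.Gamma ((m:ℝ)+1) = m.factorial := Real.Gamma_nat_eq_factorial m
  have h2 : Real.Gamma ((m:ℝ)+2) = (m+1).factorial := by
    have := Real.Gamma_nat_eq_factorial (m+1)
    push_cast at this ⊢
    rw [← this]; ring_nf
  rw [h1, h2] at h
  linarith

lemma key2_even (m : ℕ) (hm : 2 ≤ m) :
    ((2*m:ℝ)/2) * (Real.log 2 + 1 - Real.log ((2*m:ℝ)+2)) + Real.log (Real.Gamma ((2*m:ℝ)/2+1))
      ≤ (1/2) * Real.log (2*m:ℝ) - 0.05 * Real.log 2 := by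
  have hM : (2:ℝ) ≤ (m:ℝ) := by exact_mod_cast hm
  have hM0 : (0:ℝ) < m := by linarith
  have hG : Real.Gamma ((2*m:ℝ)/2+1) = m.factorial := by
    have h := Real.Gamma_nat_eq_factorial m
    rw [← h]; norm_num
  rw [hG]
  have F1 := log_factorial_le (by omega : 1 ≤ m)
  have F2 : Real.log ((2*m:ℝ)+2) = Real.log (1+1/(m:ℝ)) + (Real.log 2 + Real.log m) := by
    rw [← Real.log_mul (by norm_num) (by positivity), ← Real.log_mul (by positivity) (by positivity)]
    congr 1
    field_simp
  have F3 : 1 - 1/(2*(m:ℝ)) ≤ (m:ℝ) * Real.log (1+1/(m:ℝ)) := by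
    have h := quad_log (t := 1/(m:ℝ)) (by positivity)
    have h2 := mul_le_mul_of_nonneg_left h (le_of_lt hM0)
    have h3 : (m:ℝ) * (1/(m:ℝ) - (1/(m:ℝ))^2/2) = 1 - 1/(2*(m:ℝ)) := by
      field_simp
    linarith [h3 ▸ h2]
  have F4 : Real.log (2*(m:ℝ)) = Real.log 2 + Real.log m :=
    Real.log_mul (by norm_num) (by positivity)
  have F6 : 1/(2*(m:ℝ)) ≤ 1/4 := by
    rw [div_le_div_iff₀ (by linarith) (by norm_num)]; linarith
  have F5 := Real.log_two_gt_d9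
  rw [F2, F4]
  nlinarith [F1, F3, F5, F6]

lemma key2_odd (m : ℕ) (hm : 3 ≤ m) :
    ((2*(m:ℝ)+1)/2) * (Real.log 2 + 1 - Real.log ((2*(m:ℝ)+1)+2))
        + Real.log (Real.Gamma ((2*(m:ℝ)+1)/2+1))
      ≤ (1/2) * Real.log (2*(m:ℝ)+1) - 0.05 * Real.log 2 := by
  have hM : (3:ℝ) ≤ (m:ℝ) := by exact_mod_cast hm
  have hM0 : (0:ℝ) < m := by linarith
  set u := Real.log (1+1/(m:ℝ)) with hu
  set v := Real.log (1+2/(2*(m:ℝ)+1)) with hv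
  have hGarg : (2*(m:ℝ)+1)/2 + 1 = (m:ℝ) + 3/2 := by ring
  rw [hGarg]
  have G1 := gamma_half_le m
  have G2 := log_factorial_le (by omega : 1 ≤ m)
  have G3 := log_factorial_le (by omega : 1 ≤ m+1)
  push_cast at G3
  have H6 : Real.log ((m:ℝ)+1) = Real.log (m:ℝ) + u := by
    rw [hu, ← Real.log_mul (by positivity) (by positivity)]
    congr 1; field_simp
  have H2 : Real.log ((m:ℝ)+1/2) = Real.log (2*(m:ℝ)+1) - Real.log 2 := by
    rw [← Real.log_div (by positivity) (by norm_num)]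
    congr 1; ring
  have H1 : Real.log (m:ℝ) + Real.log ((m:ℝ)+1) ≤ 2 * Real.log ((m:ℝ)+1/2) := by
    have hle : (m:ℝ)*((m:ℝ)+1) ≤ ((m:ℝ)+1/2)^2 := by nlinarith
    have := Real.log_le_log (by positivity) hle
    rw [Real.log_mul (by positivity) (by positivity), Real.log_pow] at this
    push_cast at this
    linarith
  rw [H6, H2] at H1
  have H8 := mul_le_mul_of_nonneg_left H1 (by linarith : (0:ℝ) ≤ (m:ℝ)+1)
  rw [H6] at G3
  have H3 : u ≤ 1/(m:ℝ) := by
    rw [hu]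
    have := Real.log_le_sub_one_of_pos (x := 1+1/(m:ℝ)) (by positivity)
    linarith
  have H4 : 1 - 1/(2*(m:ℝ)+1) ≤ ((2*(m:ℝ)+1)/2) * v := by
    have h := quad_log (t := 2/(2*(m:ℝ)+1)) (by positivity)
    have h2 := mul_le_mul_of_nonneg_left h (by positivity : (0:ℝ) ≤ (2*(m:ℝ)+1)/2)
    have h3 : ((2*(m:ℝ)+1)/2) * (2/(2*(m:ℝ)+1) - (2/(2*(m:ℝ)+1))^2/2) = 1 - 1/(2*(m:ℝ)+1) := by
      field_simp
    rw [hv]; linarith [h3 ▸ h2]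
  have F2' : Real.log (2*(m:ℝ)+1+2) = v + Real.log (2*(m:ℝ)+1) := by
    rw [hv, ← Real.log_mul (by positivity) (by positivity)]
    congr 1; field_simp
  rw [F2']
  have H5a : 1/(m:ℝ) ≤ 1/3 := by
    rw [div_le_div_iff₀ (by linarith) (by norm_num)]; linarith
  have H5b : 1/(2*(m:ℝ)+1) ≤ 1/7 := by
    rw [div_le_div_iff₀ (by linarith) (by norm_num)]; linarith
  have F5 := Real.log_two_gt_d9
  nlinarith [G1, G2, G3, H8, H3, H4, H5a, H5b, F5]

lemma key2_two :
    ((2:ℝ)/2) * (Real.log 2 + 1 - Real.log ((2:ℝ)+2)) + Real.log (Real.Gamma ((2:ℝ)/2+1))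
      ≤ (1/2) * Real.log (2:ℝ) - 0.05 * Real.log 2 := by
  have hG : Real.Gamma ((2:ℝ)/2+1) = 1 := by
    rw [show (2:ℝ)/2+1 = 1+1 by norm_num, Real.Gamma_add_one one_ne_zero, Real.Gamma_one, one_mul]
  have h4 : Real.log ((2:ℝ)+2) = 2 * Real.log 2 := by
    rw [show (2:ℝ)+2 = 2^2 by norm_num, Real.log_pow]; norm_num
  rw [hG, h4, Real.log_one]
  linarith [Real.log_two_gt_d9]

lemma key2_three :
    ((3:ℝ)/2) * (Real.log 2 + 1 - Real.log ((3:ℝ)+2)) + Real.log (Real.Gamma ((3:ℝ)/2+1))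
      ≤ (1/2) * Real.log (3:ℝ) - 0.05 * Real.log 2 := by
  have hG : Real.Gamma ((3:ℝ)/2+1) = 3/4 * Real.sqrt π := by
    rw [Real.Gamma_add_one (by norm_num)]
    rw [show (3:ℝ)/2 = 1/2 + 1 by norm_num, Real.Gamma_add_one (by norm_num),
      Real.Gamma_one_half_eq]
    ring
  have hlg : Real.log (3/4 * Real.sqrt π) = Real.log 3 - 2 * Real.log 2 + Real.log π / 2 := by
    rw [Real.log_mul (by norm_num) (by positivity), Real.log_sqrt Real.pi_pos.le,
      Real.log_div (by norm_num) (by norm_num), show (4:ℝ) = 2^2 by norm_num, Real.log_pow]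
    push_cast; ring
  have P3 : Real.exp 1 ^ (30:ℕ) * 3 ^ (10:ℕ) * π ^ (10:ℕ) ≤ 5 ^ (30:ℕ) * 2 ^ (9:ℕ) := by
    calc Real.exp 1 ^ (30:ℕ) * 3 ^ (10:ℕ) * π ^ (10:ℕ)
        ≤ (2.7182818286:ℝ) ^ (30:ℕ) * 3 ^ (10:ℕ) * (3.15:ℝ) ^ (10:ℕ) := by
          gcongr
          · exact Real.exp_one_lt_d9.le
          · exact Real.pi_lt_d2.le
      _ ≤ 5 ^ (30:ℕ) * 2 ^ (9:ℕ) := by norm_num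
  have N3 : 30 + 10 * Real.log 3 + 10 * Real.log π ≤ 30 * Real.log 5 + 9 * Real.log 2 := by
    have h := Real.log_le_log (by positivity) P3
    rw [Real.log_mul (by positivity) (by positivity), Real.log_mul (by positivity) (by positivity),
      Real.log_mul (by positivity) (by norm_num),
      Real.log_pow, Real.log_pow, Real.log_pow, Real.log_pow, Real.log_pow, Real.log_exp] at h
    push_cast at h
    linarith
  have h5 : Real.log ((3:ℝ)+2) = Real.log 5 := by norm_num
  rw [hG, hlg, h5]
  linarith

lemma key2_five :
    ((5:ℝ)/2) * (Real.log 2 + 1 - Real.log ((5:ℝ)+2)) + Real.log (Real.Gamma ((5:ℝ)/2+1))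
      ≤ (1/2) * Real.log (5:ℝ) - 0.05 * Real.log 2 := by
  have hG : Real.Gamma ((5:ℝ)/2+1) = 15/8 * Real.sqrt π := by
    rw [Real.Gamma_add_one (by norm_num)]
    rw [show (5:ℝ)/2 = 3/2 + 1 by norm_num, Real.Gamma_add_one (by norm_num)]
    rw [show (3:ℝ)/2 = 1/2 + 1 by norm_num, Real.Gamma_add_one (by norm_num),
      Real.Gamma_one_half_eq]
    ring
  have hlg : Real.log (15/8 * Real.sqrt π)
      = Real.log 3 + Real.log 5 - 3 * Real.log 2 + Real.log π / 2 := by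
    rw [Real.log_mul (by norm_num) (by positivity), Real.log_sqrt Real.pi_pos.le,
      Real.log_div (by norm_num) (by norm_num), show (8:ℝ) = 2^3 by norm_num, Real.log_pow,
      show (15:ℝ) = 3*5 by norm_num, Real.log_mul (by norm_num) (by norm_num)]
    push_cast; ring
  have P5 : Real.exp 1 ^ (50:ℕ) * 3 ^ (20:ℕ) * 5 ^ (10:ℕ) * π ^ (10:ℕ)
      ≤ 7 ^ (50:ℕ) * 2 ^ (9:ℕ) := by
    calc Real.exp 1 ^ (50:ℕ) * 3 ^ (20:ℕ) * 5 ^ (10:ℕ) * π ^ (10:ℕ)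
        ≤ (2.7182818286:ℝ) ^ (50:ℕ) * 3 ^ (20:ℕ) * 5 ^ (10:ℕ) * (3.15:ℝ) ^ (10:ℕ) := by
          gcongr
          · exact Real.exp_one_lt_d9.le
          · exact Real.pi_lt_d2.le
      _ ≤ 7 ^ (50:ℕ) * 2 ^ (9:ℕ) := by norm_num
  have N5 : 50 + 20 * Real.log 3 + 10 * Real.log 5 + 10 * Real.log π
      ≤ 50 * Real.log 7 + 9 * Real.log 2 := by
    have h := Real.log_le_log (by positivity) P5
    rw [Real.log_mul (by positivity) (by positivity), Real.log_mul (by positivity) (by positivity),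
      Real.log_mul (by positivity) (by positivity), Real.log_mul (by positivity) (by norm_num),
      Real.log_pow, Real.log_pow, Real.log_pow, Real.log_pow, Real.log_pow, Real.log_pow,
      Real.log_exp] at h
    push_cast at h
    linarith
  have h7 : Real.log ((5:ℝ)+2) = Real.log 7 := by norm_num
  rw [hG, hlg, h7]
  linarith

lemma key2 (n : ℕ) (hn : 2 ≤ n) :
    ((n:ℝ)/2) * (Real.log 2 + 1 - Real.log ((n:ℝ)+2)) + Real.log (Real.Gamma ((n:ℝ)/2+1))
      ≤ (1/2) * Real.log (n:ℝ) - 0.05 * Real.log 2 := by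
  rcases Nat.even_or_odd n with ⟨m, hm⟩ | ⟨m, hm⟩
  · subst hm
    match m, hn with
    | 1, _ =>
      have h := key2_two
      push_cast
      norm_num at h ⊢
      linarith
    | (m+2), _ =>
      have h := key2_even (m+2) (by omega)
      push_cast at h ⊢
      convert h using 4 <;> push_cast <;> ring
  · subst hm
    match m, hn with
    | 1, _ =>
      have h := key2_three
      push_cast
      norm_num at h ⊢
      linarith
    | 2, _ =>
      have h := key2_five
      push_cast
      norm_num at h ⊢
      linarith
    | (m+3), _ =>
      have h := key2_odd (m+3) (by omega)
      push_cast at h ⊢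
      convert h using 4 <;> push_cast <;> ring

/-- For every integer `n ≥ 2`, the gap between Shannon's and Zador's rate-distortion lower
bounds satisfies `(1/2) log₂(2πe/(n+2)) - (1/n) log₂ κ_n ≤ (log₂ n)/(2n) - 0.05/n`, where
`κ_n = π^{n/2} / Γ(n/2+1)` is the volume of the unit `n`-ball. -/
theorem shannon_zador_gap_bound (n : ℕ) (hn : 2 ≤ n) :
    (1 / 2) * Real.logb 2 (2 * π * Real.exp 1 / ((n : ℝ) + 2))
        - (1 / (n : ℝ)) * Real.logb 2 (π ^ ((n : ℝ) / 2) / Real.Gamma ((n : ℝ) / 2 + 1))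
      ≤ Real.logb 2 (n : ℝ) / (2 * (n : ℝ)) - 0.05 / (n : ℝ) := by
  have hn0 : (0:ℝ) < n := by
    have : 0 < n := by omega
    exact_mod_cast this
  have hl2 : (0:ℝ) < Real.log 2 := Real.log_pos (by norm_num)
  have hGpos : 0 < Real.Gamma ((n:ℝ)/2+1) := Real.Gamma_pos_of_pos (by positivity)
  have hB : Real.log (π ^ ((n:ℝ)/2) / Real.Gamma ((n:ℝ)/2+1))
      = ((n:ℝ)/2) * Real.log π - Real.log (Real.Gamma ((n:ℝ)/2+1)) := by
    rw [Real.log_div (by positivity : (π:ℝ) ^ ((n:ℝ)/2) ≠ 0) (ne_of_gt hGpos),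
      Real.log_rpow Real.pi_pos]
  have hA : Real.log (2 * π * Real.exp 1 / ((n:ℝ)+2))
      = Real.log 2 + Real.log π + 1 - Real.log ((n:ℝ)+2) := by
    rw [Real.log_div (by positivity) (by positivity),
      Real.log_mul (by positivity) (Real.exp_ne_zero 1),
      Real.log_mul (by norm_num) (ne_of_gt Real.pi_pos), Real.log_exp]
  have key := key2 n hn
  have hne1 : (n:ℝ) ≠ 0 := ne_of_gt hn0
  have hne2 : Real.log 2 ≠ 0 := ne_of_gt hl2
  simp only [Real.logb]
  rw [hA, hB]
  have e1 : (1/2) * ((Real.log 2 + Real.log π + 1 - Real.log ((n:ℝ)+2))/Real.log 2)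
      - (1/(n:ℝ)) * ((((n:ℝ)/2)*Real.log π - Real.log (Real.Gamma ((n:ℝ)/2+1)))/Real.log 2)
      = (1/((n:ℝ)*Real.log 2)) * (((n:ℝ)/2)*(Real.log 2 + 1 - Real.log ((n:ℝ)+2))
          + Real.log (Real.Gamma ((n:ℝ)/2+1))) := by
    field_simp
    ring
  have e2 : Real.log (n:ℝ)/Real.log 2/(2*(n:ℝ)) - 0.05/(n:ℝ)
      = (1/((n:ℝ)*Real.log 2)) * ((1/2)*Real.log (n:ℝ) - 0.05*Real.log 2) := by
    field_simp
  rw [e1, e2]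
  exact mul_le_mul_of_nonneg_left key (by positivity)
end
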